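/- arXiv:1408.5620 — 6 statements merged into one kernel-verified Lean document; each statement's English description precedes it below -/
import Mathlib

section
/- (Witt–Artin decomposition) Let W ⊆ V be any subspace, let E be a complement of W ∩ W^ω in W and let F be a complement of W ∩ W^ω in W^ω. Then E and F are symplectic subspaces (E ∩ E^ω = 0 and F ∩ F^ω = 0), E and F are ω-orthogonal, V is the internal direct sum V = E ⊕ F ⊕ (E ⊕ F)^ω, and W ∩ W^ω is a lagrangian subspace of the symplectic subspace G = (E ⊕ F)^ω, i.e. W ∩ W^ω = (W ∩ W^ω)^ω ∩ G. -/
open Module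

variable {V : Type*} [AddCommGroup V] [Module ℝ V]

/-- The symplectic orthogonal of a subspace `W`:
`{v ∈ V | ω v w = 0 for all w ∈ W}`. -/
def sorth (ω : LinearMap.BilinForm ℝ V) (W : Submodule ℝ V) : Submodule ℝ V where
  carrier := {v | ∀ w ∈ W, ω v w = 0}
  add_mem' := by
    intro a b ha hb w hw
    simp only [Set.mem_setOf_eq] at *
    simp [ha w hw, hb w hw]
  zero_mem' := by intro w hw; simp
  smul_mem' := by
    intro c a ha w hw
    simp only [Set.mem_setOf_eq] at *
    simp [ha w hw]

/-- Two subspaces are `ω`-orthogonal. -/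
def OrthSub (ω : LinearMap.BilinForm ℝ V) (E F : Submodule ℝ V) : Prop :=
  ∀ e ∈ E, ∀ f ∈ F, ω e f = 0


lemma mem_sorth {ω : LinearMap.BilinForm ℝ V} {W : Submodule ℝ V} {v : V} :
    v ∈ sorth ω W ↔ ∀ w ∈ W, ω v w = 0 := Iff.rfl

lemma sorth_eq_orthogonal (ω : LinearMap.BilinForm ℝ V) (hωalt : ω.IsAlt)
    (W : Submodule ℝ V) : sorth ω W = ω.orthogonal W := by
  ext x
  exact ⟨fun h w hw => hωalt.isRefl _ _ (h w hw),
         fun h w hw => hωalt.isRefl _ _ (h w hw)⟩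

lemma sorth_le_sorth (ω : LinearMap.BilinForm ℝ V) {A B : Submodule ℝ V} (h : A ≤ B) :
    sorth ω B ≤ sorth ω A := fun _ hx a ha => hx a (h ha)

lemma sorth_sup (ω : LinearMap.BilinForm ℝ V) (A B : Submodule ℝ V) :
    sorth ω (A ⊔ B) = sorth ω A ⊓ sorth ω B := by
  apply le_antisymm
  · exact le_inf (sorth_le_sorth ω le_sup_left) (sorth_le_sorth ω le_sup_right)
  · rintro x ⟨hxA, hxB⟩ w hw
    obtain ⟨a, ha, b, hb, rfl⟩ := Submodule.mem_sup.mp hw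
    simp [hxA a ha, hxB b hb]

lemma sorth_sorth [FiniteDimensional ℝ V] (ω : LinearMap.BilinForm ℝ V)
    (hω : ω.Nondegenerate) (hωalt : ω.IsAlt) (W : Submodule ℝ V) :
    sorth ω (sorth ω W) = W := by
  rw [sorth_eq_orthogonal ω hωalt, sorth_eq_orthogonal ω hωalt]
  exact ω.orthogonal_orthogonal hω hωalt.isRefl W

theorem witt_artin_decomposition [FiniteDimensional ℝ V]
    (ω : LinearMap.BilinForm ℝ V) (hω : ω.Nondegenerate) (hωalt : ω.IsAlt)
    (W E F : Submodule ℝ V)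
    (hE₁ : E ⊓ (W ⊓ sorth ω W) = ⊥) (hE₂ : E ⊔ (W ⊓ sorth ω W) = W)
    (hF₁ : F ⊓ (W ⊓ sorth ω W) = ⊥) (hF₂ : F ⊔ (W ⊓ sorth ω W) = sorth ω W) :
    E ⊓ sorth ω E = ⊥ ∧ F ⊓ sorth ω F = ⊥ ∧ OrthSub ω E F ∧
      E ⊓ F = ⊥ ∧ (E ⊔ F) ⊓ sorth ω (E ⊔ F) = ⊥ ∧
      E ⊔ F ⊔ sorth ω (E ⊔ F) = ⊤ ∧
      W ⊓ sorth ω W = sorth ω (W ⊓ sorth ω W) ⊓ sorth ω (E ⊔ F) := by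
  set K := W ⊓ sorth ω W with hK
  have hrefl := hωalt.isRefl
  have hEW : E ≤ W := hE₂ ▸ le_sup_left
  have hFWo : F ≤ sorth ω W := hF₂ ▸ le_sup_left
  have hKW : K ≤ W := inf_le_left
  have hKWo : K ≤ sorth ω W := inf_le_right
  -- E is symplectic
  have hEs : E ⊓ sorth ω E = ⊥ := by
    rw [eq_bot_iff]
    rintro x ⟨hxE, hxEo⟩
    rw [← hE₁]
    refine ⟨hxE, hEW hxE, fun w hw => ?_⟩
    rw [← hE₂] at hw
    obtain ⟨e, he, k, hk, rfl⟩ := Submodule.mem_sup.mp hw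
    have h1 : ω x e = 0 := hxEo e he
    have h2 : ω x k = 0 := hrefl _ _ (hk.2 x (hEW hxE))
    simp [h1, h2]
  -- F is symplectic
  have hFs : F ⊓ sorth ω F = ⊥ := by
    rw [eq_bot_iff]
    rintro x ⟨hxF, hxFo⟩
    have hxWW : x ∈ sorth ω (sorth ω W) := by
      intro w hw
      rw [← hF₂] at hw
      obtain ⟨f, hf, k, hk, rfl⟩ := Submodule.mem_sup.mp hw
      have h1 : ω x f = 0 := hxFo f hf
      have h2 : ω x k = 0 := hFWo hxF k hk.1
      simp [h1, h2]
    rw [sorth_sorth ω hω hωalt] at hxWW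
    rw [← hF₁]
    exact ⟨hxF, hxWW, hFWo hxF⟩
  -- E and F are orthogonal
  have hEF : OrthSub ω E F := fun e he f hf => hrefl _ _ (hFWo hf e (hEW he))
  -- E ⊓ F = ⊥
  have hEFbot : E ⊓ F = ⊥ := by
    rw [eq_bot_iff]
    rintro x ⟨hxE, hxF⟩
    rw [← hE₁]
    exact ⟨hxE, hEW hxE, hFWo hxF⟩
  -- E ⊔ F is symplectic
  have hGs : (E ⊔ F) ⊓ sorth ω (E ⊔ F) = ⊥ := by
    rw [eq_bot_iff]
    rintro x ⟨hxG, hxGo⟩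
    obtain ⟨e, he, f, hf, rfl⟩ := Submodule.mem_sup.mp hxG
    have he0 : e = 0 := by
      have : e ∈ E ⊓ sorth ω E := by
        refine ⟨he, fun e' he' => ?_⟩
        have h1 : ω (e + f) e' = 0 := hxGo e' (Submodule.mem_sup_left he')
        have h2 : ω f e' = 0 := hrefl _ _ (hEF e' he' f hf)
        simpa [h2] using h1
      simpa [hEs] using this
    have hf0 : f = 0 := by
      have : f ∈ F ⊓ sorth ω F := by
        refine ⟨hf, fun f' hf' => ?_⟩
        have h1 : ω (e + f) f' = 0 := hxGo f' (Submodule.mem_sup_right hf')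
        have h2 : ω e f' = 0 := hEF e he f' hf'
        simpa [h2] using h1
      simpa [hFs] using this
    simp [he0, hf0]
  -- E ⊔ F ⊔ sorth = ⊤
  have hGtop : E ⊔ F ⊔ sorth ω (E ⊔ F) = ⊤ := by
    have hcompl : IsCompl (E ⊔ F) (ω.orthogonal (E ⊔ F)) := by
      rw [ω.isCompl_orthogonal_iff_disjoint hrefl, disjoint_iff,
        ← sorth_eq_orthogonal ω hωalt]
      exact hGs
    rw [sorth_eq_orthogonal ω hωalt]
    exact hcompl.codisjoint.eq_top
  -- lagrangian claim
  have hlag : K = sorth ω K ⊓ sorth ω (E ⊔ F) := by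
    rw [sorth_sup]
    apply le_antisymm
    · refine le_inf (le_trans hKWo (sorth_le_sorth ω hKW))
        (le_inf (le_trans hKWo (sorth_le_sorth ω hEW)) ?_)
      calc K ≤ W := hKW
        _ = sorth ω (sorth ω W) := (sorth_sorth ω hω hωalt W).symm
        _ ≤ sorth ω F := sorth_le_sorth ω hFWo
    · rintro x ⟨hxK, hxE, hxF⟩
      have hxW : x ∈ sorth ω W := by
        rw [← hE₂, sorth_sup]
        exact ⟨hxE, hxK⟩
      have hxW' : x ∈ W := by
        rw [← sorth_sorth ω hω hωalt W, ← hF₂, sorth_sup]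
        exact ⟨hxF, hxK⟩
      exact ⟨hxW', hxW⟩
  exact ⟨hEs, hFs, hEF, hEFbot, hGs, hGtop, hlag⟩
end

section
/- (Existence of an elementary decomposition) Let (A,B) be a coisotropic pair in (V,ω). Then there exist pairwise ω-orthogonal symplectic subspaces V₁, V₂, V₃, V₄, V₅ with V = V₁ ⊕ V₂ ⊕ V₃ ⊕ V₄ ⊕ V₅ (internal direct sum), and subspaces Aᵢ, Bᵢ ⊆ Vᵢ with A = A₁ ⊕ ... ⊕ A₅ and B = B₁ ⊕ ... ⊕ B₅, such that: (A₁,B₁) is of type λ in V₁ (A₁ = B₁ lagrangian in V₁); (A₂,B₂) is of type δ in V₂ (A₂, B₂ lagrangian in V₂ with A₂ ∩ B₂ = 0); (A₃,B₃) is of type σ in V₃ (A₃ = B₃ = V₃); (A₄,B₄) is of type μ_B in V₄ (B₄ = V₄ and A₄ lagrangian in V₄); and (A₅,B₅) is of type μ_A in V₅ (A₅ = V₅ and B₅ lagrangian in V₅). -/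
open Module

variable {V : Type*} [AddCommGroup V] [Module ℝ V]

/-- An elementary decomposition of a coisotropic pair `(A, B)`:
`V = V₁ ⊕ ⋯ ⊕ V₅` is an internal direct sum of pairwise `ω`-orthogonal symplectic
subspaces, `A = ⨁ Aᵢ`, `B = ⨁ Bᵢ` with `Aᵢ, Bᵢ ⊆ Vᵢ`, and the summand pairs are
of elementary types `(λ, δ, σ, μ_B, μ_A)` in this order. -/
def IsElemDecomp (ω : LinearMap.BilinForm ℝ V) (A B : Submodule ℝ V)
    (Vs As Bs : Fin 5 → Submodule ℝ V) : Prop :=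
  DirectSum.IsInternal Vs ∧
  (∀ i j, i ≠ j → OrthSub ω (Vs i) (Vs j)) ∧
  (∀ i, Vs i ⊓ sorth ω (Vs i) = ⊥) ∧
  (∀ i, As i ≤ Vs i) ∧ (∀ i, Bs i ≤ Vs i) ∧
  A = (⨆ i, As i) ∧ B = (⨆ i, Bs i) ∧
  -- type λ : A₁ = B₁ is lagrangian in V₁
  (As 0 = Bs 0 ∧ As 0 = sorth ω (As 0) ⊓ Vs 0) ∧
  -- type δ : A₂, B₂ lagrangian in V₂ with A₂ ⊓ B₂ = ⊥
  (As 1 = sorth ω (As 1) ⊓ Vs 1 ∧ Bs 1 = sorth ω (Bs 1) ⊓ Vs 1 ∧ As 1 ⊓ Bs 1 = ⊥) ∧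
  -- type σ : A₃ = B₃ = V₃
  (As 2 = Vs 2 ∧ Bs 2 = Vs 2) ∧
  -- type μ_B : B₄ = V₄ and A₄ lagrangian in V₄
  (Bs 3 = Vs 3 ∧ As 3 = sorth ω (As 3) ⊓ Vs 3) ∧
  -- type μ_A : A₅ = V₅ and B₅ lagrangian in V₅
  (As 4 = Vs 4 ∧ Bs 4 = sorth ω (Bs 4) ⊓ Vs 4)

namespace ElemAux

variable {ω : LinearMap.BilinForm ℝ V}

lemma mem_sorth {W : Submodule ℝ V} {x : V} : x ∈ sorth ω W ↔ ∀ w ∈ W, ω x w = 0 := Iff.rfl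

lemma sorth_antitone {W X : Submodule ℝ V} (h : W ≤ X) : sorth ω X ≤ sorth ω W :=
  fun _ hv w hw => hv w (h hw)

lemma sorth_sup {X Y : Submodule ℝ V} : sorth ω (X ⊔ Y) = sorth ω X ⊓ sorth ω Y := by
  apply le_antisymm
  · exact le_inf (sorth_antitone le_sup_left) (sorth_antitone le_sup_right)
  · rintro v ⟨h1, h2⟩ w hw
    rcases Submodule.mem_sup.1 hw with ⟨x, hx, y, hy, rfl⟩
    rw [map_add, h1 x hx, h2 y hy, add_zero]

lemma orthSub_symm (halt : ω.IsAlt) {E F : Submodule ℝ V} (h : OrthSub ω E F) :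
    OrthSub ω F E := fun f hf e he => halt.isRefl _ _ (h e he f hf)

lemma orth_sup_left {X Y Z : Submodule ℝ V} (h1 : OrthSub ω X Z) (h2 : OrthSub ω Y Z) :
    OrthSub ω (X ⊔ Y) Z := by
  intro e he f hf
  rcases Submodule.mem_sup.1 he with ⟨x, hx, y, hy, rfl⟩
  rw [map_add, LinearMap.add_apply, h1 x hx f hf, h2 y hy f hf, add_zero]

lemma orth_sup_right {X Y Z : Submodule ℝ V} (h1 : OrthSub ω Z X) (h2 : OrthSub ω Z Y) :
    OrthSub ω Z (X ⊔ Y) := by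
  intro e he f hf
  rcases Submodule.mem_sup.1 hf with ⟨x, hx, y, hy, rfl⟩
  rw [map_add, h1 e he x hx, h2 e he y hy, add_zero]

lemma mem_sorth_span_pair {e f v : V} (he : ω v e = 0) (hf : ω v f = 0) :
    v ∈ sorth ω (Submodule.span ℝ {e, f}) := by
  intro w hw
  rcases Submodule.mem_span_pair.1 hw with ⟨a, b, rfl⟩
  simp [he, hf]

lemma mem_sorth_span_singleton {e v : V} (he : ω v e = 0) :
    v ∈ sorth ω (Submodule.span ℝ {e}) := by
  intro w hw
  rcases Submodule.mem_span_singleton.1 hw with ⟨a, rfl⟩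
  simp [he]

section FinDim

variable [FiniteDimensional ℝ V]

lemma sorth_eq_orthogonal (halt : ω.IsAlt) (W : Submodule ℝ V) :
    sorth ω W = ω.orthogonal W := by
  ext v
  constructor
  · intro h w hw
    exact halt.isRefl _ _ (h w hw)
  · intro h w hw
    exact halt.isRefl _ _ (h w hw)

lemma finrank_sorth (hω : ω.Nondegenerate) (halt : ω.IsAlt) (W : Submodule ℝ V) :
    finrank ℝ (sorth ω W) + finrank ℝ W = finrank ℝ V := by
  rw [sorth_eq_orthogonal halt, LinearMap.BilinForm.finrank_orthogonal hω]
  have := Submodule.finrank_le W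
  omega

lemma sup_sorth_eq_top (hω : ω.Nondegenerate) (halt : ω.IsAlt) {W : Submodule ℝ V}
    (hW : W ⊓ sorth ω W = ⊥) : W ⊔ sorth ω W = ⊤ := by
  apply Submodule.eq_top_of_finrank_eq
  have h1 := Submodule.finrank_sup_add_finrank_inf_eq W (sorth ω W)
  rw [hW, finrank_bot, add_zero] at h1
  rw [h1]
  have := finrank_sorth hω halt W
  omega

lemma finrank_rel_sorth (hω : ω.Nondegenerate) (halt : ω.IsAlt) {W A : Submodule ℝ V}
    (hW : W ⊓ sorth ω W = ⊥) (hAW : A ≤ W) :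
    finrank ℝ (sorth ω A ⊓ W : Submodule ℝ V) + finrank ℝ A = finrank ℝ W := by
  have hsup : sorth ω A ⊔ W = ⊤ := by
    have step : W ⊔ sorth ω W ≤ sorth ω A ⊔ W :=
      sup_le le_sup_right (le_trans (sorth_antitone hAW) le_sup_left)
    rw [sup_sorth_eq_top hω halt hW] at step
    exact top_unique step
  have h1 := Submodule.finrank_sup_add_finrank_inf_eq (sorth ω A) W
  rw [hsup] at h1
  have h2 := finrank_sorth hω halt A
  have h3 : finrank ℝ (⊤ : Submodule ℝ V) = finrank ℝ V := finrank_top ℝ V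
  have h4 := Submodule.finrank_le W
  omega

lemma rel_double_orth (hω : ω.Nondegenerate) (halt : ω.IsAlt) {W B : Submodule ℝ V}
    (hW : W ⊓ sorth ω W = ⊥) (hBW : B ≤ W) :
    sorth ω (sorth ω B ⊓ W) ⊓ W = B := by
  have hle : B ≤ sorth ω (sorth ω B ⊓ W) ⊓ W := by
    refine le_inf (fun x hx w hw => ?_) hBW
    exact halt.isRefl _ _ (hw.1 x hx)
  refine (Submodule.eq_of_le_of_finrank_le hle ?_).symm
  have h1 := finrank_rel_sorth hω halt hW hBW
  have h2 := finrank_rel_sorth hω halt hW (inf_le_right : sorth ω B ⊓ W ≤ W)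
  omega

end FinDim

end ElemAux

namespace ElemAux

variable {V : Type*} [AddCommGroup V] [Module ℝ V] {ω : LinearMap.BilinForm ℝ V}

lemma e_mem_pair {e f : V} : e ∈ Submodule.span ℝ {e, f} :=
  Submodule.subset_span (Set.mem_insert _ _)

lemma f_mem_pair {e f : V} : f ∈ Submodule.span ℝ {e, f} :=
  Submodule.subset_span (Set.mem_insert_of_mem _ rfl)

lemma span_pair_le {e f : V} {W : Submodule ℝ V} (he : e ∈ W) (hf : f ∈ W) :
    Submodule.span ℝ {e, f} ≤ W := by
  rw [Submodule.span_le]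
  rintro x (rfl | rfl) <;> assumption

lemma span_singleton_le_pair {e f : V} :
    Submodule.span ℝ {e} ≤ Submodule.span ℝ {e, f} :=
  Submodule.span_mono (by simp)

lemma span_singleton_le_pair' {e f : V} :
    Submodule.span ℝ {f} ≤ Submodule.span ℝ {e, f} :=
  Submodule.span_mono (by simp)

lemma ne_zero_of_pair (halt : ω.IsAlt) {e f : V} (hef : ω e f ≠ 0) : e ≠ 0 := by
  intro h
  apply hef
  simp [h]

/-- decomposition of any vector w.r.t. a symplectic pair -/
lemma proj_sorth (halt : ω.IsAlt) {e f : V} (hef : ω e f ≠ 0) (x : V) :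
    x - ((ω x f / ω e f) • e - (ω x e / ω e f) • f) ∈
      sorth ω (Submodule.span ℝ {e, f}) := by
  have hfe : ω f e = -ω e f := by
    have h := LinearMap.IsAlt.neg halt e f
    linarith
  apply mem_sorth_span_pair
  · have : ω ((ω x f / ω e f) • e - (ω x e / ω e f) • f) e = ω x e := by
      simp only [map_sub, map_smul, LinearMap.sub_apply, LinearMap.smul_apply, smul_eq_mul,
        halt.self_eq_zero, mul_zero, hfe]
      field_simp
      ring
    rw [map_sub, LinearMap.sub_apply, this, sub_self]
  · have : ω ((ω x f / ω e f) • e - (ω x e / ω e f) • f) f = ω x f := by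
      simp only [map_sub, map_smul, LinearMap.sub_apply, LinearMap.smul_apply, smul_eq_mul,
        halt.self_eq_zero, mul_zero, sub_zero]
      field_simp
    rw [map_sub, LinearMap.sub_apply, this, sub_self]

lemma sup_sorth_pair (halt : ω.IsAlt) {e f : V} {W : Submodule ℝ V}
    (heW : e ∈ W) (hfW : f ∈ W) (hef : ω e f ≠ 0) :
    Submodule.span ℝ {e, f} ⊔ (sorth ω (Submodule.span ℝ {e, f}) ⊓ W) = W := by
  apply le_antisymm
  · exact sup_le (span_pair_le heW hfW) inf_le_right
  · intro x hx
    rw [Submodule.mem_sup]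
    refine ⟨(ω x f / ω e f) • e - (ω x e / ω e f) • f, ?_, x - ((ω x f / ω e f) • e - (ω x e / ω e f) • f), ⟨proj_sorth halt hef x, ?_⟩, by abel⟩
    · exact sub_mem (Submodule.smul_mem _ _ e_mem_pair) (Submodule.smul_mem _ _ f_mem_pair)
    · exact sub_mem hx (sub_mem (Submodule.smul_mem _ _ (span_pair_le heW hfW e_mem_pair))
        (Submodule.smul_mem _ _ (span_pair_le heW hfW f_mem_pair)))

lemma pair_symplectic (halt : ω.IsAlt) {e f : V} (hef : ω e f ≠ 0) :
    Submodule.span ℝ {e, f} ⊓ sorth ω (Submodule.span ℝ {e, f}) = ⊥ := by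
  have hfe : ω f e = -ω e f := by have h := LinearMap.IsAlt.neg halt e f; linarith
  rw [eq_bot_iff]
  rintro x ⟨hx1, hx2⟩
  rcases Submodule.mem_span_pair.1 hx1 with ⟨a, b, rfl⟩
  have h1 : ω (a • e + b • f) e = 0 := hx2 e e_mem_pair
  have h2 : ω (a • e + b • f) f = 0 := hx2 f f_mem_pair
  simp only [map_add, map_smul, LinearMap.add_apply, LinearMap.smul_apply, smul_eq_mul,
    halt.self_eq_zero, mul_zero, hfe, zero_add, add_zero] at h1 h2
  have hb : b = 0 := by
    rcases mul_eq_zero.1 h1 with h | h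
    · exact h
    · exact absurd (neg_eq_zero.1 h) hef
  have ha : a = 0 := by
    rcases mul_eq_zero.1 h2 with h | h
    · exact h
    · exact absurd h hef
  simp [ha, hb]

lemma line_lagr (halt : ω.IsAlt) {e f : V} (hef : ω e f ≠ 0) :
    Submodule.span ℝ {e} = sorth ω (Submodule.span ℝ {e}) ⊓ Submodule.span ℝ {e, f} := by
  have hfe : ω f e = -ω e f := by have h := LinearMap.IsAlt.neg halt e f; linarith
  apply le_antisymm
  · refine le_inf (fun x hx => ?_) span_singleton_le_pair
    rcases Submodule.mem_span_singleton.1 hx with ⟨a, rfl⟩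
    exact mem_sorth_span_singleton (by simp [halt.self_eq_zero])
  · rintro x ⟨hx1, hx2⟩
    rcases Submodule.mem_span_pair.1 hx2 with ⟨a, b, rfl⟩
    have h1 : ω (a • e + b • f) e = 0 := hx1 e (Submodule.mem_span_singleton_self e)
    simp only [map_add, map_smul, LinearMap.add_apply, LinearMap.smul_apply, smul_eq_mul,
      halt.self_eq_zero, mul_zero, hfe, zero_add] at h1
    have hb : b = 0 := by
      rcases mul_eq_zero.1 h1 with h | h
      · exact h
      · exact absurd (neg_eq_zero.1 h) hef
    rw [hb]
    simp only [zero_smul, add_zero]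
    exact Submodule.smul_mem _ _ (Submodule.mem_span_singleton_self e)

lemma span_inf_span_bot (halt : ω.IsAlt) {e f : V} (hef : ω e f ≠ 0) :
    Submodule.span ℝ {e} ⊓ Submodule.span ℝ {f} = ⊥ := by
  rw [eq_bot_iff]
  rintro x ⟨hx1, hx2⟩
  rcases Submodule.mem_span_singleton.1 hx1 with ⟨a, rfl⟩
  rcases Submodule.mem_span_singleton.1 hx2 with ⟨b, hb⟩
  have h1 : ω (a • e) f = a * ω e f := by simp
  have h2 : ω (b • f) f = 0 := by simp [halt.self_eq_zero]
  rw [← hb, h2] at h1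
  rcases mul_eq_zero.1 h1.symm with h | h
  · simp [h]
  · exact absurd h hef

lemma split1 (halt : ω.IsAlt) {W A : Submodule ℝ V} {e f : V} (hef : ω e f ≠ 0)
    (hAW : A ≤ W) (heA : e ∈ A) (hea : e ∈ sorth ω A) :
    A = Submodule.span ℝ {e} ⊔ (A ⊓ (sorth ω (Submodule.span ℝ {e, f}) ⊓ W)) := by
  apply le_antisymm
  · intro x hx
    have hxe : ω x e = 0 := halt.isRefl _ _ (hea x hx)
    rw [Submodule.mem_sup]
    refine ⟨(ω x f / ω e f) • e, Submodule.smul_mem _ _ (Submodule.mem_span_singleton_self e),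
      x - (ω x f / ω e f) • e, ⟨sub_mem hx (Submodule.smul_mem _ _ heA), ?_, ?_⟩, by abel⟩
    · apply mem_sorth_span_pair
      · simp [hxe, halt.self_eq_zero]
      · simp only [map_sub, map_smul, LinearMap.sub_apply, LinearMap.smul_apply, smul_eq_mul]
        field_simp
        ring
    · exact hAW (sub_mem hx (Submodule.smul_mem _ _ heA))
  · exact sup_le ((Submodule.span_singleton_le_iff_mem e A).2 heA) inf_le_left

lemma split2 {W A U : Submodule ℝ V} (hUA : U ≤ A) (hAW : A ≤ W)
    (hsup : U ⊔ (sorth ω U ⊓ W) = W) :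
    A = U ⊔ (A ⊓ (sorth ω U ⊓ W)) := by
  apply le_antisymm
  · intro x hx
    have hxW : x ∈ U ⊔ (sorth ω U ⊓ W) := by rw [hsup]; exact hAW hx
    rcases Submodule.mem_sup.1 hxW with ⟨u, hu, w, hw, rfl⟩
    have hwA : w ∈ A := by
      have h2 : (u + w) - u ∈ A := sub_mem hx (hUA hu)
      simpa using h2
    exact Submodule.add_mem_sup hu ⟨hwA, hw⟩
  · exact sup_le hUA inf_le_left

end ElemAux
namespace ElemAux

variable {V : Type*} [AddCommGroup V] [Module ℝ V] {ω : LinearMap.BilinForm ℝ V}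

lemma exists_pairing {X : Submodule ℝ V} {e : V} (h : e ∉ sorth ω X) :
    ∃ f ∈ X, ω e f ≠ 0 := by
  by_contra hc
  push_neg at hc
  exact h fun w hw => hc w hw

lemma inter_symplectic {W U : Submodule ℝ V}
    (hW : W ⊓ sorth ω W = ⊥) (hsup : U ⊔ (sorth ω U ⊓ W) = W) :
    (sorth ω U ⊓ W) ⊓ sorth ω (sorth ω U ⊓ W) = ⊥ := by
  rw [eq_bot_iff]
  rintro x ⟨⟨hxU, hxW⟩, hxs⟩
  have hx : x ∈ sorth ω W := by
    rw [← hsup, sorth_sup]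
    exact ⟨hxU, hxs⟩
  have : x ∈ W ⊓ sorth ω W := ⟨hxW, hx⟩
  rwa [hW] at this

lemma rel_coiso {W W' U A A₀ : Submodule ℝ V} (hW' : W' = sorth ω U ⊓ W)
    (hA0 : A₀ ≤ U) (hAsum : A = A₀ ⊔ (A ⊓ W')) (hcoiso : sorth ω A ⊓ W ≤ A) :
    sorth ω (A ⊓ W') ⊓ W' ≤ A ⊓ W' := by
  rintro x ⟨hx1, hx2⟩
  have hxU : x ∈ sorth ω U := (hW'.le hx2).1
  have hxW : x ∈ W := (hW'.le hx2).2
  have hxA : x ∈ sorth ω A := by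
    rw [hAsum, sorth_sup]
    exact ⟨sorth_antitone hA0 hxU, hx1⟩
  exact ⟨hcoiso ⟨hxA, hxW⟩, hx2⟩

lemma symp_sup (halt : ω.IsAlt) {U T : Submodule ℝ V}
    (hU : U ⊓ sorth ω U = ⊥) (hT : T ⊓ sorth ω T = ⊥) (hUT : OrthSub ω U T) :
    (U ⊔ T) ⊓ sorth ω (U ⊔ T) = ⊥ := by
  rw [eq_bot_iff]
  rintro x ⟨hx1, hx2⟩
  rcases Submodule.mem_sup.1 hx1 with ⟨u, hu, t, ht, rfl⟩
  have hu0 : u = 0 := by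
    have hus : u ∈ sorth ω U := by
      intro w hw
      have h1 : ω (u + t) w = 0 := hx2 w (Submodule.mem_sup_left hw)
      have h2 : ω t w = 0 := halt.isRefl _ _ (hUT w hw t ht)
      have h3 : ω (u + t) w = ω u w + ω t w := by rw [map_add, LinearMap.add_apply]
      rw [h3, h2, add_zero] at h1
      exact h1
    have : u ∈ U ⊓ sorth ω U := ⟨hu, hus⟩
    rwa [hU, Submodule.mem_bot] at this
  have ht0 : t = 0 := by
    have hts : t ∈ sorth ω T := by
      intro w hw
      have h1 : ω (u + t) w = 0 := hx2 w (Submodule.mem_sup_right hw)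
      have h2 : ω u w = 0 := hUT u hu w hw
      have h3 : ω (u + t) w = ω u w + ω t w := by rw [map_add, LinearMap.add_apply]
      rw [h3, h2, zero_add] at h1
      exact h1
    have : t ∈ T ⊓ sorth ω T := ⟨ht, hts⟩
    rwa [hT, Submodule.mem_bot] at this
  simp [hu0, ht0]

lemma lagr_sup (halt : ω.IsAlt) {U T L M : Submodule ℝ V}
    (hLU : L ≤ U) (hMT : M ≤ T)
    (hL : L = sorth ω L ⊓ U) (hM : M = sorth ω M ⊓ T) (hUT : OrthSub ω U T) :
    L ⊔ M = sorth ω (L ⊔ M) ⊓ (U ⊔ T) := by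
  apply le_antisymm
  · rw [sorth_sup]
    refine sup_le (le_inf (le_inf ?_ ?_) (hLU.trans le_sup_left))
      (le_inf (le_inf ?_ ?_) (hMT.trans le_sup_right))
    · exact hL.le.trans inf_le_left
    · exact fun x hx m hm => hUT x (hLU hx) m (hMT hm)
    · exact fun x hx l hl => halt.isRefl _ _ (hUT l (hLU hl) x (hMT hx))
    · exact hM.le.trans inf_le_left
  · rintro x ⟨hxs, hxUT⟩
    rcases Submodule.mem_sup.1 hxUT with ⟨u, hu, t, ht, rfl⟩
    have hu' : u ∈ L := by
      rw [hL]
      refine ⟨fun l hl => ?_, hu⟩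
      have h1 : ω (u + t) l = 0 := hxs l (Submodule.mem_sup_left hl)
      have h2 : ω t l = 0 := halt.isRefl _ _ (hUT l (hLU hl) t ht)
      have h3 : ω (u + t) l = ω u l + ω t l := by rw [map_add, LinearMap.add_apply]
      rw [h3, h2, add_zero] at h1
      exact h1
    have ht' : t ∈ M := by
      rw [hM]
      refine ⟨fun m hm => ?_, ht⟩
      have h1 : ω (u + t) m = 0 := hxs m (Submodule.mem_sup_right hm)
      have h2 : ω u m = 0 := hUT u hu m (hMT hm)
      have h3 : ω (u + t) m = ω u m + ω t m := by rw [map_add, LinearMap.add_apply]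
      rw [h3, h2, zero_add] at h1
      exact h1
    exact Submodule.add_mem_sup hu' ht'

lemma sup_inf_bot {U T A₀ B₀ A' B' : Submodule ℝ V} (hUT : U ⊓ T = ⊥)
    (hA0 : A₀ ≤ U) (hB0 : B₀ ≤ U) (hA' : A' ≤ T) (hB' : B' ≤ T)
    (h0 : A₀ ⊓ B₀ = ⊥) (h' : A' ⊓ B' = ⊥) : (A₀ ⊔ A') ⊓ (B₀ ⊔ B') = ⊥ := by
  rw [eq_bot_iff]
  rintro x ⟨hx1, hx2⟩
  rcases Submodule.mem_sup.1 hx1 with ⟨a, ha, a', ha', rfl⟩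
  rcases Submodule.mem_sup.1 hx2 with ⟨b, hb, b', hb', hEq⟩
  have h1 : a - b = b' - a' := by
    have h2 : a + a' = b + b' := hEq.symm
    have h3 : a - b = (b + b') - b - a' := by rw [← h2]; abel
    rw [h3]; abel
  have hU : a - b ∈ U := sub_mem (hA0 ha) (hB0 hb)
  have hT : a - b ∈ T := h1 ▸ sub_mem (hB' hb') (hA' ha')
  have hab : a - b = 0 := by
    have : a - b ∈ U ⊓ T := ⟨hU, hT⟩
    rwa [hUT, Submodule.mem_bot] at this
  have ha0 : a = 0 := by
    have hba : a = b := by rw [← sub_eq_zero]; exact hab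
    have : a ∈ A₀ ⊓ B₀ := ⟨ha, hba ▸ hb⟩
    rwa [h0, Submodule.mem_bot] at this
  have ha'0 : a' = 0 := by
    have h4 : b' = a' := by rw [← sub_eq_zero, ← h1, hab]
    have : a' ∈ A' ⊓ B' := ⟨ha', h4 ▸ hb'⟩
    rwa [h', Submodule.mem_bot] at this
  simp [ha0, ha'0]

/-- The five elementary type conditions, indexed by a natural number. -/
def TypeCond (ω : LinearMap.BilinForm ℝ V) : ℕ → Submodule ℝ V → Submodule ℝ V → Submodule ℝ V → Prop
  | 0 => fun U A B => A = B ∧ A = sorth ω A ⊓ U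
  | 1 => fun U A B => A = sorth ω A ⊓ U ∧ B = sorth ω B ⊓ U ∧ A ⊓ B = ⊥
  | 2 => fun U A B => A = U ∧ B = U
  | 3 => fun U A B => B = U ∧ A = sorth ω A ⊓ U
  | _ => fun U A B => A = U ∧ B = sorth ω B ⊓ U

lemma typeCond_bot (n : ℕ) : TypeCond ω n ⊥ ⊥ ⊥ := by
  have h : (⊥ : Submodule ℝ V) = sorth ω ⊥ ⊓ ⊥ := by rw [inf_bot_eq]
  match n with
  | 0 => exact ⟨rfl, h⟩
  | 1 => exact ⟨h, h, bot_inf_eq _⟩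
  | 2 => exact ⟨rfl, rfl⟩
  | 3 => exact ⟨rfl, h⟩
  | (n+4) => exact ⟨rfl, h⟩

lemma typeCond_sup (halt : ω.IsAlt) (n : ℕ) {U T A₀ B₀ A' B' : Submodule ℝ V}
    (hA0 : A₀ ≤ U) (hB0 : B₀ ≤ U) (hA' : A' ≤ T) (hB' : B' ≤ T)
    (hUT : OrthSub ω U T) (hUTbot : U ⊓ T = ⊥)
    (h1 : TypeCond ω n U A₀ B₀) (h2 : TypeCond ω n T A' B') :
    TypeCond ω n (U ⊔ T) (A₀ ⊔ A') (B₀ ⊔ B') := by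
  match n with
  | 0 => exact ⟨by rw [h1.1, h2.1], lagr_sup halt hA0 hA' h1.2 h2.2 hUT⟩
  | 1 => exact ⟨lagr_sup halt hA0 hA' h1.1 h2.1 hUT, lagr_sup halt hB0 hB' h1.2.1 h2.2.1 hUT,
      sup_inf_bot hUTbot hA0 hB0 hA' hB' h1.2.2 h2.2.2⟩
  | 2 => exact ⟨by rw [h1.1, h2.1], by rw [h1.2, h2.2]⟩
  | 3 => exact ⟨by rw [h1.1, h2.1], lagr_sup halt hA0 hA' h1.2 h2.2 hUT⟩
  | (n+4) => exact ⟨by rw [h1.1, h2.1], lagr_sup halt hB0 hB' h1.2 h2.2 hUT⟩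

lemma iSup_update (g : Fin 5 → Submodule ℝ V) (t : Fin 5) (x : Submodule ℝ V) :
    (⨆ i, Function.update g t (x ⊔ g t) i) = x ⊔ ⨆ i, g i := by
  apply le_antisymm
  · apply iSup_le
    intro i
    by_cases h : i = t
    · subst h
      rw [Function.update_self]
      exact sup_le_sup_left (le_iSup g i) x
    · rw [Function.update_of_ne h]
      exact (le_iSup g i).trans le_sup_right
  · refine sup_le ?_ (iSup_le fun i => ?_)
    · have h : x ≤ Function.update g t (x ⊔ g t) t := by
        rw [Function.update_self]; exact le_sup_left
      exact h.trans (le_iSup _ t)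
    · by_cases h : i = t
      · subst h
        have h2 : g i ≤ Function.update g i (x ⊔ g i) i := by
          rw [Function.update_self]; exact le_sup_right
        exact h2.trans (le_iSup _ i)
      · have h2 : g i = Function.update g t (x ⊔ g t) i := (Function.update_of_ne h _ _).symm
        rw [h2]
        exact le_iSup _ i

/-- relative decomposition predicate -/
def RelDecomp (ω : LinearMap.BilinForm ℝ V) (W A B : Submodule ℝ V)
    (Vs As Bs : Fin 5 → Submodule ℝ V) : Prop :=
  (⨆ i, Vs i) = W ∧
  (∀ i j, i ≠ j → OrthSub ω (Vs i) (Vs j)) ∧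
  (∀ i, Vs i ⊓ sorth ω (Vs i) = ⊥) ∧
  (∀ i, As i ≤ Vs i) ∧ (∀ i, Bs i ≤ Vs i) ∧
  A = (⨆ i, As i) ∧ B = (⨆ i, Bs i) ∧
  (∀ i : Fin 5, TypeCond ω i.val (Vs i) (As i) (Bs i))

lemma merge (halt : ω.IsAlt) (t : Fin 5)
    {W U W' A B A' B' A₀ B₀ : Submodule ℝ V} {Vs' As' Bs' : Fin 5 → Submodule ℝ V}
    (hrec : RelDecomp ω W' A' B' Vs' As' Bs')
    (hW' : W' = sorth ω U ⊓ W)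
    (hUsymp : U ⊓ sorth ω U = ⊥) (hsup : U ⊔ W' = W)
    (hA0U : A₀ ≤ U) (hB0U : B₀ ≤ U)
    (hAsum : A = A₀ ⊔ A') (hBsum : B = B₀ ⊔ B')
    (htype : TypeCond ω t.val U A₀ B₀) :
    ∃ Vs As Bs, RelDecomp ω W A B Vs As Bs := by
  obtain ⟨hsupV, horth, hsymp, hAle, hBle, hAeq, hBeq, htypes⟩ := hrec
  have hV'le : ∀ i, Vs' i ≤ W' := fun i => hsupV ▸ le_iSup Vs' i
  have hV'sorth : ∀ i, Vs' i ≤ sorth ω U := fun i => (hV'le i).trans (hW'.le.trans inf_le_left)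
  have hOrthVU : ∀ i, OrthSub ω (Vs' i) U := fun i e he f hf => (hV'sorth i he) f hf
  have hOrthUV : ∀ i, OrthSub ω U (Vs' i) := fun i => orthSub_symm halt (hOrthVU i)
  have hUW'bot : U ⊓ W' = ⊥ := by
    rw [eq_bot_iff]
    rintro x ⟨h1, h2⟩
    have : x ∈ U ⊓ sorth ω U := ⟨h1, (hW'.le h2).1⟩
    rwa [hUsymp] at this
  have hUVbot : ∀ i, U ⊓ Vs' i = ⊥ := fun i =>
    bot_unique ((inf_le_inf_left U (hV'le i)).trans hUW'bot.le)
  refine ⟨Function.update Vs' t (U ⊔ Vs' t), Function.update As' t (A₀ ⊔ As' t),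
    Function.update Bs' t (B₀ ⊔ Bs' t), ?_, ?_, ?_, ?_, ?_, ?_, ?_, ?_⟩
  · rw [iSup_update, hsupV, hsup]
  · intro i j hij
    by_cases hi : i = t
    · subst hi
      rw [Function.update_self, Function.update_of_ne (Ne.symm hij)]
      exact orth_sup_left (hOrthUV j) (horth i j hij)
    · by_cases hj : j = t
      · subst hj
        rw [Function.update_self, Function.update_of_ne hi]
        exact orth_sup_right (hOrthVU i) (horth i j hij)
      · rw [Function.update_of_ne hi, Function.update_of_ne hj]
        exact horth i j hij
  · intro i
    by_cases hi : i = t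
    · subst hi
      rw [Function.update_self]
      exact symp_sup halt hUsymp (hsymp i) (hOrthUV i)
    · rw [Function.update_of_ne hi]
      exact hsymp i
  · intro i
    by_cases hi : i = t
    · subst hi
      rw [Function.update_self, Function.update_self]
      exact sup_le_sup hA0U (hAle i)
    · rw [Function.update_of_ne hi, Function.update_of_ne hi]
      exact hAle i
  · intro i
    by_cases hi : i = t
    · subst hi
      rw [Function.update_self, Function.update_self]
      exact sup_le_sup hB0U (hBle i)
    · rw [Function.update_of_ne hi, Function.update_of_ne hi]
      exact hBle i
  · rw [iSup_update, ← hAeq]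
    exact hAsum
  · rw [iSup_update, ← hBeq]
    exact hBsum
  · intro i
    by_cases hi : i = t
    · subst hi
      rw [Function.update_self, Function.update_self, Function.update_self]
      exact typeCond_sup halt i.val hA0U hB0U (hAle i) (hBle i) (hOrthUV i) (hUVbot i)
        htype (htypes i)
    · rw [Function.update_of_ne hi, Function.update_of_ne hi, Function.update_of_ne hi]
      exact htypes i

lemma base_case {W A B : Submodule ℝ V} (hW : W = ⊥) (hAW : A ≤ W) (hBW : B ≤ W) :
    RelDecomp ω W A B (fun _ => ⊥) (fun _ => ⊥) (fun _ => ⊥) := by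
  subst hW
  have hA : A = ⊥ := le_bot_iff.1 hAW
  have hB : B = ⊥ := le_bot_iff.1 hBW
  refine ⟨by simp, fun i j _ e he f hf => ?_, fun i => by simp, fun i => le_rfl, fun i => le_rfl,
    by simp [hA], by simp [hB], fun i => typeCond_bot i.val⟩
  rw [(Submodule.mem_bot ℝ).1 hf, map_zero]

lemma indep_of_orth (halt : ω.IsAlt) {Vs : Fin 5 → Submodule ℝ V}
    (horth : ∀ i j, i ≠ j → OrthSub ω (Vs i) (Vs j))
    (hsymp : ∀ i, Vs i ⊓ sorth ω (Vs i) = ⊥) : iSupIndep Vs := by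
  intro i
  rw [disjoint_iff]
  apply bot_unique
  have h2 : (⨆ j, ⨆ _ : j ≠ i, Vs j) ≤ sorth ω (Vs i) :=
    iSup_le fun j => iSup_le fun hj v hv w hw => horth j i hj v hv w hw
  calc Vs i ⊓ (⨆ j, ⨆ _ : j ≠ i, Vs j) ≤ Vs i ⊓ sorth ω (Vs i) := inf_le_inf_left _ h2
    _ = ⊥ := hsymp i

end ElemAux
namespace ElemAux

variable {V : Type*} [AddCommGroup V] [Module ℝ V] {ω : LinearMap.BilinForm ℝ V}

lemma step_case [FiniteDimensional ℝ V] (hω : ω.Nondegenerate) (halt : ω.IsAlt) {n : ℕ}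
    (ih : ∀ W A B : Submodule ℝ V, finrank ℝ W ≤ n → W ⊓ sorth ω W = ⊥ → A ≤ W → B ≤ W →
      sorth ω A ⊓ W ≤ A → sorth ω B ⊓ W ≤ B → ∃ Vs As Bs, RelDecomp ω W A B Vs As Bs)
    {W A B : Submodule ℝ V} (hn : finrank ℝ W ≤ n + 1)
    (hWs : W ⊓ sorth ω W = ⊥) (hAW : A ≤ W) (hBW : B ≤ W)
    (hAco : sorth ω A ⊓ W ≤ A) (hBco : sorth ω B ⊓ W ≤ B)
    (t : Fin 5) {e f : V} (heW : e ∈ W) (hfW : f ∈ W) (hef : ω e f ≠ 0)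
    {A₀ B₀ : Submodule ℝ V} (hA0 : A₀ ≤ Submodule.span ℝ {e, f})
    (hB0 : B₀ ≤ Submodule.span ℝ {e, f})
    (hAsplit : A = A₀ ⊔ (A ⊓ (sorth ω (Submodule.span ℝ {e, f}) ⊓ W)))
    (hBsplit : B = B₀ ⊔ (B ⊓ (sorth ω (Submodule.span ℝ {e, f}) ⊓ W)))
    (htype : TypeCond ω t.val (Submodule.span ℝ {e, f}) A₀ B₀) :
    ∃ Vs As Bs, RelDecomp ω W A B Vs As Bs := by
  set U := Submodule.span ℝ {e, f} with hUdef
  set W' := sorth ω U ⊓ W with hW'def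
  have hsup : U ⊔ W' = W := sup_sorth_pair halt heW hfW hef
  have hUsymp : U ⊓ sorth ω U = ⊥ := pair_symplectic halt hef
  have hW's : W' ⊓ sorth ω W' = ⊥ := inter_symplectic hWs hsup
  have hA'co : sorth ω (A ⊓ W') ⊓ W' ≤ A ⊓ W' := rel_coiso hW'def hA0 hAsplit hAco
  have hB'co : sorth ω (B ⊓ W') ⊓ W' ≤ B ⊓ W' := rel_coiso hW'def hB0 hBsplit hBco
  have hUW'bot : U ⊓ W' = ⊥ :=
    bot_unique (le_trans (inf_le_inf_left U inf_le_left) hUsymp.le)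
  have hdim : finrank ℝ W' ≤ n := by
    have h1 := Submodule.finrank_sup_add_finrank_inf_eq U W'
    rw [hsup, hUW'bot, finrank_bot, add_zero] at h1
    have hUne : U ≠ ⊥ := by
      intro h
      exact (ne_zero_of_pair halt hef) ((Submodule.mem_bot ℝ).1 (h ▸ (e_mem_pair : e ∈ U)))
    have hUpos : 0 < finrank ℝ U := by
      rcases Nat.eq_zero_or_pos (finrank ℝ U) with h | h
      · exact absurd (Submodule.finrank_eq_zero.1 h) hUne
      · exact h
    omega
  obtain ⟨Vs', As', Bs', hrec⟩ :=
    ih W' (A ⊓ W') (B ⊓ W') hdim hW's inf_le_right inf_le_right hA'co hB'co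
  exact merge halt t hrec hW'def hUsymp hsup hA0 hB0 hAsplit hBsplit htype

lemma key [FiniteDimensional ℝ V] (hω : ω.Nondegenerate) (halt : ω.IsAlt) :
    ∀ (n : ℕ) (W A B : Submodule ℝ V), finrank ℝ W ≤ n → W ⊓ sorth ω W = ⊥ →
      A ≤ W → B ≤ W → sorth ω A ⊓ W ≤ A → sorth ω B ⊓ W ≤ B →
      ∃ Vs As Bs, RelDecomp ω W A B Vs As Bs := by
  intro n
  induction n with
  | zero =>
    intro W A B hn hWs hAW hBW hAco hBco
    have hW : W = ⊥ := Submodule.finrank_eq_zero.1 (Nat.le_zero.1 hn)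
    exact ⟨_, _, _, base_case hW hAW hBW⟩
  | succ n ih =>
    intro W A B hn hWs hAW hBW hAco hBco
    by_cases h0 : finrank ℝ W = 0
    case pos => exact ⟨_, _, _, base_case (Submodule.finrank_eq_zero.1 h0) hAW hBW⟩
    case neg =>
    have hWpair : ∀ x ∈ W, x ≠ 0 → x ∉ sorth ω W := by
      intro x hx hx0 hs
      have h2 : x ∈ W ⊓ sorth ω W := ⟨hx, hs⟩
      rw [hWs, Submodule.mem_bot] at h2
      exact hx0 h2
    by_cases hab : (sorth ω A ⊓ W) ⊓ (sorth ω B ⊓ W) ≠ ⊥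
    case pos =>
      -- type λ
      obtain ⟨e, he, he0⟩ := (Submodule.ne_bot_iff _).1 hab
      obtain ⟨⟨hesA, heW⟩, hesB, -⟩ := he
      have heA : e ∈ A := hAco ⟨hesA, heW⟩
      have heB : e ∈ B := hBco ⟨hesB, heW⟩
      obtain ⟨f, hfW, hef⟩ := exists_pairing (hWpair e heW he0)
      exact step_case hω halt ih hn hWs hAW hBW hAco hBco 0 heW hfW hef
        span_singleton_le_pair span_singleton_le_pair
        (split1 halt hef hAW heA hesA) (split1 halt hef hBW heB hesB)
        ⟨rfl, line_lagr halt hef⟩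
    case neg =>
    rw [not_ne_iff] at hab
    by_cases habB : (sorth ω A ⊓ W) ⊓ B ≠ ⊥
    case pos =>
      -- type μ_B
      obtain ⟨e, he, he0⟩ := (Submodule.ne_bot_iff _).1 habB
      obtain ⟨⟨hesA, heW⟩, heB⟩ := he
      have heA : e ∈ A := hAco ⟨hesA, heW⟩
      have henb : e ∉ sorth ω B := by
        intro hs
        have h2 : e ∈ (sorth ω A ⊓ W) ⊓ (sorth ω B ⊓ W) := ⟨⟨hesA, heW⟩, hs, heW⟩
        rw [hab, Submodule.mem_bot] at h2
        exact he0 h2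
      obtain ⟨f, hfB, hef⟩ := exists_pairing henb
      have hfW : f ∈ W := hBW hfB
      exact step_case hω halt ih hn hWs hAW hBW hAco hBco 3 heW hfW hef
        span_singleton_le_pair le_rfl
        (split1 halt hef hAW heA hesA)
        (split2 (span_pair_le heB hfB) hBW (sup_sorth_pair halt heW hfW hef))
        ⟨rfl, line_lagr halt hef⟩
    case neg =>
    rw [not_ne_iff] at habB
    by_cases habA : (sorth ω B ⊓ W) ⊓ A ≠ ⊥
    case pos =>
      -- type μ_A
      obtain ⟨e, he, he0⟩ := (Submodule.ne_bot_iff _).1 habA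
      obtain ⟨⟨hesB, heW⟩, heA⟩ := he
      have heB : e ∈ B := hBco ⟨hesB, heW⟩
      have hena : e ∉ sorth ω A := by
        intro hs
        have h2 : e ∈ (sorth ω A ⊓ W) ⊓ (sorth ω B ⊓ W) := ⟨⟨hs, heW⟩, hesB, heW⟩
        rw [hab, Submodule.mem_bot] at h2
        exact he0 h2
      obtain ⟨f, hfA, hef⟩ := exists_pairing hena
      have hfW : f ∈ W := hAW hfA
      exact step_case hω halt ih hn hWs hAW hBW hAco hBco 4 heW hfW hef
        le_rfl span_singleton_le_pair
        (split2 (span_pair_le heA hfA) hAW (sup_sorth_pair halt heW hfW hef))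
        (split1 halt hef hBW heB hesB)
        ⟨rfl, line_lagr halt hef⟩
    case neg =>
    rw [not_ne_iff] at habA
    by_cases ha : sorth ω A ⊓ W ≠ ⊥
    case pos =>
      -- type δ
      obtain ⟨e, he, he0⟩ := (Submodule.ne_bot_iff _).1 ha
      obtain ⟨hesA, heW⟩ := he
      have heA : e ∈ A := hAco ⟨hesA, heW⟩
      have hnb : e ∉ sorth ω (sorth ω B ⊓ W) := by
        intro hs
        have h2 : e ∈ sorth ω (sorth ω B ⊓ W) ⊓ W := ⟨hs, heW⟩
        rw [rel_double_orth hω halt hWs hBW] at h2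
        have h3 : e ∈ (sorth ω A ⊓ W) ⊓ B := ⟨⟨hesA, heW⟩, h2⟩
        rw [habB, Submodule.mem_bot] at h3
        exact he0 h3
      obtain ⟨f, hfb, hef⟩ := exists_pairing hnb
      have hfW : f ∈ W := hfb.2
      have hfB : f ∈ B := hBco hfb
      have hfe : ω f e ≠ 0 := by
        intro h2
        have h := LinearMap.IsAlt.neg halt e f
        exact hef (by linarith)
      have hBsplit : B = Submodule.span ℝ {f} ⊔
          (B ⊓ (sorth ω (Submodule.span ℝ {e, f}) ⊓ W)) := by
        have h2 := split1 halt hfe hBW hfB hfb.1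
        rwa [Set.pair_comm f e] at h2
      have hBlagr : Submodule.span ℝ {f} =
          sorth ω (Submodule.span ℝ {f}) ⊓ Submodule.span ℝ {e, f} := by
        have h2 := line_lagr halt hfe
        rwa [Set.pair_comm f e] at h2
      exact step_case hω halt ih hn hWs hAW hBW hAco hBco 1 heW hfW hef
        span_singleton_le_pair span_singleton_le_pair'
        (split1 halt hef hAW heA hesA) hBsplit
        ⟨line_lagr halt hef, hBlagr, span_inf_span_bot halt hef⟩
    case neg =>
    rw [not_ne_iff] at ha
    -- type σ : A = B = W
    have hAeqW : A = W := by
      have h1 := finrank_rel_sorth hω halt hWs hAW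
      rw [ha, finrank_bot, zero_add] at h1
      exact Submodule.eq_of_le_of_finrank_le hAW h1.ge
    have hb : sorth ω B ⊓ W = ⊥ := by
      apply le_bot_iff.1
      have hle : sorth ω B ⊓ W ≤ (sorth ω B ⊓ W) ⊓ A :=
        le_inf le_rfl (by rw [hAeqW]; exact inf_le_right)
      exact hle.trans habA.le
    have hBeqW : B = W := by
      have h1 := finrank_rel_sorth hω halt hWs hBW
      rw [hb, finrank_bot, zero_add] at h1
      exact Submodule.eq_of_le_of_finrank_le hBW h1.ge
    have hWne : W ≠ ⊥ := by
      intro h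
      rw [h] at h0
      exact h0 (finrank_bot ℝ V)
    obtain ⟨e, heW, he0⟩ := (Submodule.ne_bot_iff _).1 hWne
    obtain ⟨f, hfW, hef⟩ := exists_pairing (hWpair e heW he0)
    have hUA : Submodule.span ℝ {e, f} ≤ A := by
      rw [hAeqW]; exact span_pair_le heW hfW
    have hUB : Submodule.span ℝ {e, f} ≤ B := by
      rw [hBeqW]; exact span_pair_le heW hfW
    exact step_case hω halt ih hn hWs hAW hBW hAco hBco 2 heW hfW hef
      le_rfl le_rfl
      (split2 hUA hAW (sup_sorth_pair halt heW hfW hef))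
      (split2 hUB hBW (sup_sorth_pair halt heW hfW hef))
      ⟨rfl, rfl⟩

end ElemAux


theorem exists_elementary_decomposition [FiniteDimensional ℝ V]
    (ω : LinearMap.BilinForm ℝ V) (hω : ω.Nondegenerate) (hωalt : ω.IsAlt)
    (A B : Submodule ℝ V) (hA : sorth ω A ≤ A) (hB : sorth ω B ≤ B) :
    ∃ Vs As Bs : Fin 5 → Submodule ℝ V, IsElemDecomp ω A B Vs As Bs := by
  have htop : (⊤ : Submodule ℝ V) ⊓ sorth ω ⊤ = ⊥ := by
    have hs : sorth ω (⊤ : Submodule ℝ V) = ⊥ := by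
      rw [eq_bot_iff]
      intro x hx
      exact (Submodule.mem_bot ℝ).2 (hω.1 x fun w => hx w trivial)
    rw [hs, inf_bot_eq]
  obtain ⟨Vs, As, Bs, hsupV, horth, hsymp, hAle, hBle, hAeq, hBeq, htypes⟩ :=
    ElemAux.key hω hωalt (finrank ℝ (⊤ : Submodule ℝ V)) ⊤ A B le_rfl htop le_top le_top
      (by simpa using hA) (by simpa using hB)
  refine ⟨Vs, As, Bs,
    (DirectSum.isInternal_submodule_iff_iSupIndep_and_iSup_eq_top Vs).2
      ⟨ElemAux.indep_of_orth hωalt horth hsymp, hsupV⟩,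
    horth, hsymp, hAle, hBle, hAeq, hBeq, htypes 0, htypes 1, htypes 2, htypes 3, htypes 4⟩
end

section
/- Let A and B be lagrangian subspaces of (V,ω) with A ≠ B and A ∩ B ≠ 0. Let à be a complement of A ∩ B in A and B̃ a complement of A ∩ B in B, and set Ṽ = à + B̃. Then Ṽ is a symplectic subspace with Ṽ = à ⊕ B̃ (internal direct sum), V = Ṽ ⊕ Ṽ^ω, à and B̃ are lagrangian subspaces of Ṽ with à ∩ B̃ = 0, A ∩ B is a lagrangian subspace of the symplectic subspace Ṽ^ω, and A = à ⊕ (A ∩ B), B = B̃ ⊕ (A ∩ B). -/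
open Module

variable {V : Type*} [AddCommGroup V] [Module ℝ V]

theorem mem_sorth_iff (ω : LinearMap.BilinForm ℝ V) (W : Submodule ℝ V) (v : V) :
    v ∈ sorth ω W ↔ ∀ w ∈ W, ω v w = 0 := Iff.rfl

theorem lagrangian_pair_splits [FiniteDimensional ℝ V]
    (ω : LinearMap.BilinForm ℝ V) (hω : ω.Nondegenerate) (hωalt : ω.IsAlt)
    (A B : Submodule ℝ V) (hA : A = sorth ω A) (hB : B = sorth ω B)
    (hne : A ≠ B) (hint : A ⊓ B ≠ ⊥)
    (A' B' : Submodule ℝ V)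
    (hA'₁ : A' ⊓ (A ⊓ B) = ⊥) (hA'₂ : A' ⊔ (A ⊓ B) = A)
    (hB'₁ : B' ⊓ (A ⊓ B) = ⊥) (hB'₂ : B' ⊔ (A ⊓ B) = B) :
    (A' ⊔ B') ⊓ sorth ω (A' ⊔ B') = ⊥ ∧
      A' ⊓ B' = ⊥ ∧
      (A' ⊔ B') ⊔ sorth ω (A' ⊔ B') = ⊤ ∧
      A' = sorth ω A' ⊓ (A' ⊔ B') ∧
      B' = sorth ω B' ⊓ (A' ⊔ B') ∧
      A ⊓ B = sorth ω (A ⊓ B) ⊓ sorth ω (A' ⊔ B') := by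
  have hrefl := hωalt.isRefl
  have hA'le : A' ≤ A := le_trans le_sup_left hA'₂.le
  have hB'le : B' ≤ B := le_trans le_sup_left hB'₂.le
  -- pairing vanishes on A and on B
  have hpairA : ∀ x ∈ A, ∀ y ∈ A, ω x y = 0 := by
    intro x hx; rw [hA] at hx; exact hx
  have hpairB : ∀ x ∈ B, ∀ y ∈ B, ω x y = 0 := by
    intro x hx; rw [hB] at hx; exact hx
  -- membership criteria
  have hmemA : ∀ v : V, (∀ w ∈ A', ω v w = 0) → (∀ w ∈ A ⊓ B, ω v w = 0) → v ∈ A := by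
    intro v h1 h2
    rw [hA]
    intro w hw
    rw [← hA'₂] at hw
    obtain ⟨a, ha, c, hc, rfl⟩ := Submodule.mem_sup.mp hw
    simp [h1 a ha, h2 c hc]
  have hmemB : ∀ v : V, (∀ w ∈ B', ω v w = 0) → (∀ w ∈ A ⊓ B, ω v w = 0) → v ∈ B := by
    intro v h1 h2
    rw [hB]
    intro w hw
    rw [← hB'₂] at hw
    obtain ⟨b, hb, c, hc, rfl⟩ := Submodule.mem_sup.mp hw
    simp [h1 b hb, h2 c hc]
  -- conjunct 1
  have h1 : (A' ⊔ B') ⊓ sorth ω (A' ⊔ B') = ⊥ := by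
    rw [eq_bot_iff]
    rintro v ⟨hv1, hv2⟩
    obtain ⟨a, ha, b, hb, rfl⟩ := Submodule.mem_sup.mp hv1
    have hb0 : b = 0 := by
      have hbA : b ∈ A := by
        apply hmemA
        · intro w hw
          have h := hv2 w (Submodule.mem_sup_left hw)
          have h' : ω a w = 0 := hpairA a (hA'le ha) w (hA'le hw)
          simp only [map_add, LinearMap.add_apply] at h
          linarith
        · intro w hw
          exact hpairB b (hB'le hb) w hw.2
      have : b ∈ B' ⊓ (A ⊓ B) := ⟨hb, hbA, hB'le hb⟩
      rw [hB'₁] at this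
      exact this
    have ha0 : a = 0 := by
      have haB : a ∈ B := by
        apply hmemB
        · intro w hw
          have h := hv2 w (Submodule.mem_sup_right hw)
          have h' : ω b w = 0 := hpairB b (hB'le hb) w (hB'le hw)
          simp only [map_add, LinearMap.add_apply] at h
          linarith
        · intro w hw
          exact hpairA a (hA'le ha) w hw.1
      have : a ∈ A' ⊓ (A ⊓ B) := ⟨ha, hA'le ha, haB⟩
      rw [hA'₁] at this
      exact this
    simp [ha0, hb0]
  refine ⟨h1, ?_, ?_, ?_, ?_, ?_⟩
  · -- conjunct 2
    rw [eq_bot_iff, ← hA'₁]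
    exact le_inf_iff.mpr ⟨inf_le_left, inf_le_inf hA'le hB'le⟩
  · -- conjunct 3
    have hsorth_eq : sorth ω (A' ⊔ B') = ω.orthogonal (A' ⊔ B') := by
      ext v
      simp only [mem_sorth_iff, LinearMap.BilinForm.mem_orthogonal_iff]
      exact ⟨fun h n hn => hrefl _ _ (h n hn), fun h w hw => hrefl _ _ (h w hw)⟩
    rw [hsorth_eq]
    have hdisj : Disjoint (A' ⊔ B') (ω.orthogonal (A' ⊔ B')) := by
      rw [disjoint_iff, ← hsorth_eq]; exact h1
    exact ((LinearMap.BilinForm.isCompl_orthogonal_iff_disjoint hrefl).mpr hdisj).sup_eq_top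
  · -- conjunct 4 : A' lagrangian in A' ⊔ B'
    apply le_antisymm
    · refine le_inf_iff.mpr ⟨?_, le_sup_left⟩
      intro x hx w hw
      exact hpairA x (hA'le hx) w (hA'le hw)
    · rintro v ⟨hv1, hv2⟩
      obtain ⟨a, ha, b, hb, rfl⟩ := Submodule.mem_sup.mp hv2
      have hb0 : b = 0 := by
        have hbA : b ∈ A := by
          apply hmemA
          · intro w hw
            have h := hv1 w hw
            have h' : ω a w = 0 := hpairA a (hA'le ha) w (hA'le hw)
            simp only [map_add, LinearMap.add_apply] at h
            linarith
          · intro w hw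
            exact hpairB b (hB'le hb) w hw.2
        have : b ∈ B' ⊓ (A ⊓ B) := ⟨hb, hbA, hB'le hb⟩
        rw [hB'₁] at this
        exact this
      simpa [hb0] using ha
  · -- conjunct 5 : B' lagrangian in A' ⊔ B'
    apply le_antisymm
    · refine le_inf_iff.mpr ⟨?_, le_sup_right⟩
      intro x hx w hw
      exact hpairB x (hB'le hx) w (hB'le hw)
    · rintro v ⟨hv1, hv2⟩
      obtain ⟨a, ha, b, hb, rfl⟩ := Submodule.mem_sup.mp hv2
      have ha0 : a = 0 := by
        have haB : a ∈ B := by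
          apply hmemB
          · intro w hw
            have h := hv1 w hw
            have h' : ω b w = 0 := hpairB b (hB'le hb) w (hB'le hw)
            simp only [map_add, LinearMap.add_apply] at h
            linarith
          · intro w hw
            exact hpairA a (hA'le ha) w hw.1
        have : a ∈ A' ⊓ (A ⊓ B) := ⟨ha, hA'le ha, haB⟩
        rw [hA'₁] at this
        exact this
      simpa [ha0] using hb
  · -- conjunct 6 : A ⊓ B lagrangian in sorth (A' ⊔ B')
    apply le_antisymm
    · rintro c ⟨hcA, hcB⟩
      refine ⟨fun w hw => hpairA c hcA w hw.1, fun w hw => ?_⟩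
      obtain ⟨a, ha, b, hb, rfl⟩ := Submodule.mem_sup.mp hw
      have h1 : ω c a = 0 := hpairA c hcA a (hA'le ha)
      have h2 : ω c b = 0 := hpairB c hcB b (hB'le hb)
      simp [h1, h2]
    · rintro v ⟨hv1, hv2⟩
      constructor
      · exact hmemA v (fun w hw => hv2 w (Submodule.mem_sup_left hw)) hv1
      · exact hmemB v (fun w hw => hv2 w (Submodule.mem_sup_right hw)) hv1
end

section
/- (Type δ is elementary) Let A and B be lagrangian subspaces of (V,ω) with A ∩ B = 0. Suppose V = V₁ ⊕ ... ⊕ V_m is an internal direct sum of pairwise ω-orthogonal symplectic subspaces, and Aᵢ, Bᵢ ⊆ Vᵢ are coisotropic subspaces of Vᵢ such that A = A₁ ⊕ ... ⊕ A_m and B = B₁ ⊕ ... ⊕ B_m. Then for each i, Aᵢ and Bᵢ are lagrangian in Vᵢ and Aᵢ ∩ Bᵢ = 0, i.e. each summand pair (Aᵢ,Bᵢ) is of type δ. -/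
open Module

variable {V : Type*} [AddCommGroup V] [Module ℝ V]

theorem type_delta_is_elementary [FiniteDimensional ℝ V]
    (ω : LinearMap.BilinForm ℝ V) (hω : ω.Nondegenerate) (hωalt : ω.IsAlt)
    (A B : Submodule ℝ V) (hAlag : A = sorth ω A) (hBlag : B = sorth ω B)
    (hAB : A ⊓ B = ⊥)
    (m : ℕ) (Vs As Bs : Fin m → Submodule ℝ V)
    (hint : DirectSum.IsInternal Vs)
    (horth : ∀ i j, i ≠ j → OrthSub ω (Vs i) (Vs j))
    (hsymp : ∀ i, Vs i ⊓ sorth ω (Vs i) = ⊥)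
    (hAle : ∀ i, As i ≤ Vs i) (hBle : ∀ i, Bs i ≤ Vs i)
    (hAco : ∀ i, sorth ω (As i) ⊓ Vs i ≤ As i)
    (hBco : ∀ i, sorth ω (Bs i) ⊓ Vs i ≤ Bs i)
    (hAsum : A = ⨆ i, As i) (hBsum : B = ⨆ i, Bs i) :
    ∀ i, As i = sorth ω (As i) ⊓ Vs i ∧ Bs i = sorth ω (Bs i) ⊓ Vs i ∧
      As i ⊓ Bs i = ⊥ := by
  intro i
  have hAi : As i ≤ A := hAsum ▸ le_iSup As i
  have hBi : Bs i ≤ B := hBsum ▸ le_iSup Bs i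
  refine ⟨le_antisymm ?_ (hAco i), le_antisymm ?_ (hBco i), ?_⟩
  · intro a ha
    refine ⟨fun w hw => ?_, hAle i ha⟩
    have h1 : a ∈ sorth ω A := hAlag ▸ hAi ha
    exact h1 w (hAi hw)
  · intro b hb
    refine ⟨fun w hw => ?_, hBle i hb⟩
    have h1 : b ∈ sorth ω B := hBlag ▸ hBi hb
    exact h1 w (hBi hw)
  · rw [eq_bot_iff, ← hAB]
    exact inf_le_inf hAi hBi
end

section
/- Let (A,B) be a coisotropic pair in (V,ω) with an elementary decomposition V = V₁ ⊕ ... ⊕ V₅, A = A₁ ⊕ ... ⊕ A₅, B = B₁ ⊕ ... ⊕ B₅ of types (λ, δ, σ, μ_B, μ_A), and set nᵢ = (1/2) dim Vᵢ. Then the canonical invariants satisfy: dim(A^ω ∩ B^ω) = n₁, dim A^ω = n₁ + n₂ + n₄, dim B^ω = n₁ + n₂ + n₅, (1/2) dim V = n₁ + n₂ + n₃ + n₄ + n₅, and dim(A^ω ∩ B) = n₁ + n₄. -/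
open Module

variable {V : Type*} [AddCommGroup V] [Module ℝ V]

lemma sorth_bot (ω : LinearMap.BilinForm ℝ V) : sorth ω (⊥ : Submodule ℝ V) = ⊤ := by
  ext v; simp only [mem_sorth, Submodule.mem_bot, Submodule.mem_top, iff_true]
  rintro w rfl; simp

lemma mem_iSup_fin {ι : Type*} [Fintype ι] {W : ι → Submodule ℝ V} {x : V} :
    x ∈ (⨆ i, W i) ↔ ∃ f : ι → V, (∀ i, f i ∈ W i) ∧ ∑ i, f i = x := by
  classical
  rw [Submodule.mem_iSup_iff_exists_finsupp]
  constructor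
  · rintro ⟨f, hf, rfl⟩
    exact ⟨f, hf, by rw [Finsupp.sum_fintype] <;> simp⟩
  · rintro ⟨f, hf, rfl⟩
    refine ⟨Finsupp.equivFunOnFinite.symm f, fun i => hf i, ?_⟩
    rw [Finsupp.sum_fintype] <;> simp

lemma indep_sum_eq_zero {ι : Type*} [Fintype ι] [DecidableEq ι] {W : ι → Submodule ℝ V}
    (hind : iSupIndep W) {f : ι → V} (hf : ∀ i, f i ∈ W i) (h0 : ∑ i, f i = 0)
    (i : ι) : f i = 0 := by
  have h1 : f i = -∑ j ∈ Finset.univ.erase i, f j := by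
    have := Finset.add_sum_erase Finset.univ f (Finset.mem_univ i)
    rw [h0] at this
    exact eq_neg_of_add_eq_zero_left this
  have h2 : f i ∈ ⨆ j, ⨆ (_ : j ≠ i), W j := by
    rw [h1]
    refine neg_mem (Submodule.sum_mem _ fun j hj => ?_)
    exact Submodule.mem_iSup_of_mem j (Submodule.mem_iSup_of_mem
      (Finset.ne_of_mem_erase hj) (hf j))
  have := (hind i).eq_bot ▸ Submodule.mem_inf.mpr ⟨hf i, h2⟩
  simpa using this

lemma finrank_biSup_indep [FiniteDimensional ℝ V] {ι : Type*} [DecidableEq ι]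
    {W : ι → Submodule ℝ V} (hind : iSupIndep W) (s : Finset ι) :
    finrank ℝ (⨆ i ∈ s, W i : Submodule ℝ V) = ∑ i ∈ s, finrank ℝ (W i) := by
  classical
  induction s using Finset.induction_on with
  | empty => simp
  | @insert a s ha ih =>
    have hdisj : Disjoint (W a) (⨆ i ∈ s, W i) := by
      refine (hind a).mono_right ?_
      refine iSup_le fun i => iSup_le fun hi => ?_
      exact le_iSup₂ (f := fun j (_ : j ≠ a) => W j) i (fun h => ha (h ▸ hi))
    rw [Finset.iSup_insert, Finset.sum_insert ha, ← ih]
    have := Submodule.finrank_sup_add_finrank_inf_eq (W a) (⨆ i ∈ s, W i)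
    rw [hdisj.eq_bot, finrank_bot] at this
    omega

lemma finrank_iSup_indep [FiniteDimensional ℝ V] {ι : Type*} [Fintype ι] [DecidableEq ι]
    {W : ι → Submodule ℝ V} (hind : iSupIndep W) :
    finrank ℝ (⨆ i, W i : Submodule ℝ V) = ∑ i, finrank ℝ (W i) := by
  rw [← finrank_biSup_indep hind Finset.univ]
  have h : (⨆ i ∈ Finset.univ, W i) = ⨆ i, W i :=
    le_antisymm (iSup₂_le fun i _ => le_iSup W i)
      (iSup_le fun i => le_iSup₂ (f := fun j (_ : j ∈ Finset.univ) => W j) i (Finset.mem_univ i))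
  rw [h]

lemma sorth_decomp (ω : LinearMap.BilinForm ℝ V) {Vs Ws : Fin 5 → Submodule ℝ V}
    (htop : ⨆ i, Vs i = ⊤)
    (horth : ∀ i j, i ≠ j → OrthSub ω (Vs i) (Vs j))
    (hW : ∀ i, Ws i ≤ Vs i) :
    sorth ω (⨆ i, Ws i) = ⨆ i, (sorth ω (Ws i) ⊓ Vs i) := by
  apply le_antisymm
  · intro v hv
    have hvtop : v ∈ ⨆ i, Vs i := htop ▸ Submodule.mem_top
    obtain ⟨f, hf, hsum⟩ := mem_iSup_fin.mp hvtop
    have hcomp : ∀ i, f i ∈ sorth ω (Ws i) ⊓ Vs i := by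
      intro i
      refine Submodule.mem_inf.mpr ⟨?_, hf i⟩
      intro w hw
      have h1 : ω v w = 0 := hv w (Submodule.mem_iSup_of_mem i hw)
      have h2 : ∑ j, ω (f j) w = 0 := by
        rw [← h1, ← hsum]; simp
      rw [Finset.sum_eq_single i] at h2
      · exact h2
      · intro j _ hj
        exact horth j i hj (f j) (hf j) w (hW i hw)
      · simp
    rw [← hsum]
    exact Submodule.sum_mem _ fun i _ => Submodule.mem_iSup_of_mem i (hcomp i)
  · refine iSup_le fun i => ?_
    rintro v ⟨hv1, hv2⟩
    intro w hw
    obtain ⟨g, hg, hsum⟩ := mem_iSup_fin.mp hw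
    rw [← hsum, map_sum]
    refine Finset.sum_eq_zero fun j _ => ?_
    by_cases hji : j = i
    · exact hji ▸ hv1 (g j) (hji ▸ hg j)
    · exact horth i j (fun h => hji h.symm) v hv2 (g j) (hW j (hg j))

lemma graded_inf {Vs C D : Fin 5 → Submodule ℝ V} (hind : iSupIndep Vs)
    (hC : ∀ i, C i ≤ Vs i) (hD : ∀ i, D i ≤ Vs i) :
    (⨆ i, C i) ⊓ (⨆ i, D i) = ⨆ i, (C i ⊓ D i) := by
  apply le_antisymm
  · rintro x ⟨hx1, hx2⟩
    obtain ⟨f, hf, hfs⟩ := mem_iSup_fin.mp hx1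
    obtain ⟨g, hg, hgs⟩ := mem_iSup_fin.mp hx2
    have heq : ∀ i, f i = g i := by
      intro i
      have h0 : ∑ j, (f j - g j) = 0 := by
        rw [Finset.sum_sub_distrib, hfs, hgs, sub_self]
      have := indep_sum_eq_zero hind
        (f := fun j => f j - g j)
        (fun j => Submodule.sub_mem _ (hC j (hf j)) (hD j (hg j))) h0 i
      exact sub_eq_zero.mp this
    rw [← hfs]
    refine Submodule.sum_mem _ fun i _ => Submodule.mem_iSup_of_mem i ?_
    exact Submodule.mem_inf.mpr ⟨hf i, heq i ▸ hg i⟩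
  · exact iSup_le fun i => le_inf
      ((inf_le_left).trans (le_iSup C i))
      ((inf_le_right).trans (le_iSup D i))

lemma lagrangian_dim [FiniteDimensional ℝ V] (ω : LinearMap.BilinForm ℝ V)
    (hω : ω.Nondegenerate) (hωalt : ω.IsAlt)
    {Vs : Fin 5 → Submodule ℝ V} (htop : ⨆ i, Vs i = ⊤) (hind : iSupIndep Vs)
    (horth : ∀ i j, i ≠ j → OrthSub ω (Vs i) (Vs j))
    (i : Fin 5) {L : Submodule ℝ V} (hL : L = sorth ω L ⊓ Vs i) :
    2 * finrank ℝ L = finrank ℝ (Vs i) := by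
  classical
  have hLV : L ≤ Vs i := hL.le.trans inf_le_right
  have hWle : ∀ j, (if j = i then L else ⊥) ≤ Vs j := by
    intro j
    by_cases h : j = i
    · subst h; simpa using hLV
    · simp [h]
  have hsupW : (⨆ j, if j = i then L else (⊥ : Submodule ℝ V)) = L := by
    apply le_antisymm
    · refine iSup_le fun j => ?_
      by_cases h : j = i <;> simp [h]
    · simpa using le_iSup (fun j => if j = i then L else (⊥ : Submodule ℝ V)) i
  have hdec := sorth_decomp ω htop horth hWle
  rw [hsupW] at hdec
  have hcomp : ∀ j, (sorth ω (if j = i then L else ⊥) ⊓ Vs j)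
      = if j = i then L else Vs j := by
    intro j
    by_cases h : j = i
    · subst h; simpa using hL.symm
    · simp [h, sorth_bot]
  rw [iSup_congr hcomp] at hdec
  have hle' : ∀ j, (if j = i then L else Vs j) ≤ Vs j := by
    intro j
    by_cases h : j = i
    · subst h; simpa using hLV
    · simp [h]
  have hind' : iSupIndep (fun j => if j = i then L else Vs j) := hind.mono hle'
  have h1 : finrank ℝ (sorth ω L) = ∑ j, finrank ℝ (if j = i then L else Vs j : Submodule ℝ V) := by
    rw [hdec, finrank_iSup_indep hind']
  have h2 : finrank ℝ (sorth ω L) = finrank ℝ V - finrank ℝ L := by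
    rw [sorth_eq_orthogonal ω hωalt]
    exact LinearMap.BilinForm.finrank_orthogonal hω L
  have hV : finrank ℝ V = ∑ j, finrank ℝ (Vs j) := by
    rw [← finrank_top ℝ V, ← htop, finrank_iSup_indep hind]
  have e1 : finrank ℝ L + ∑ j ∈ Finset.univ.erase i, finrank ℝ (if j = i then L else Vs j : Submodule ℝ V)
      = ∑ j, finrank ℝ (if j = i then L else Vs j : Submodule ℝ V) := by
    have h := Finset.add_sum_erase Finset.univ
      (fun j => finrank ℝ (if j = i then L else Vs j : Submodule ℝ V)) (Finset.mem_univ i)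
    rw [show (if i = i then L else Vs i) = L from if_pos rfl] at h
    exact h
  have e2 : ∑ j ∈ Finset.univ.erase i, finrank ℝ (if j = i then L else Vs j : Submodule ℝ V)
      = ∑ j ∈ Finset.univ.erase i, finrank ℝ (Vs j) :=
    Finset.sum_congr rfl fun j hj => by rw [if_neg (Finset.ne_of_mem_erase hj)]
  have e3 : finrank ℝ (Vs i) + ∑ j ∈ Finset.univ.erase i, finrank ℝ (Vs j)
      = ∑ j, finrank ℝ (Vs j) :=
    Finset.add_sum_erase Finset.univ (fun j => finrank ℝ (Vs j)) (Finset.mem_univ i)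
  have hLle : finrank ℝ L ≤ finrank ℝ V := Submodule.finrank_le L
  omega

theorem canonical_invariants_from_elementary_invariants [FiniteDimensional ℝ V]
    (ω : LinearMap.BilinForm ℝ V) (hω : ω.Nondegenerate) (hωalt : ω.IsAlt)
    (A B : Submodule ℝ V) (hA : sorth ω A ≤ A) (hB : sorth ω B ≤ B)
    (Vs As Bs : Fin 5 → Submodule ℝ V)
    (hdec : IsElemDecomp ω A B Vs As Bs)
    (n : Fin 5 → ℕ) (hn : ∀ i, finrank ℝ (Vs i) = 2 * n i) :
    finrank ℝ (sorth ω A ⊓ sorth ω B : Submodule ℝ V) = n 0 ∧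
      finrank ℝ (sorth ω A) = n 0 + n 1 + n 3 ∧
      finrank ℝ (sorth ω B) = n 0 + n 1 + n 4 ∧
      finrank ℝ V = 2 * (n 0 + n 1 + n 2 + n 3 + n 4) ∧
      finrank ℝ (sorth ω A ⊓ B : Submodule ℝ V) = n 0 + n 3 := by
  obtain ⟨hint, horth, hsymp, hAle, hBle, hAeq, hBeq, ⟨hAB0, hlag0⟩,
    ⟨hlagA1, hlagB1, hdisj1⟩, ⟨hA2, hB2⟩, ⟨hB3, hlagA3⟩, ⟨hA4, hlagB4⟩⟩ := hdec
  have htop : ⨆ i, Vs i = ⊤ := hint.submodule_iSup_eq_top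
  have hind : iSupIndep Vs := hint.submodule_iSupIndep
  -- the graded components of the symplectic orthogonals
  set S : Fin 5 → Submodule ℝ V := fun i => sorth ω (As i) ⊓ Vs i with hSdef
  set T : Fin 5 → Submodule ℝ V := fun i => sorth ω (Bs i) ⊓ Vs i with hTdef
  have hSle : ∀ i, S i ≤ Vs i := fun i => inf_le_right
  have hTle : ∀ i, T i ≤ Vs i := fun i => inf_le_right
  have hSA : sorth ω A = ⨆ i, S i := by rw [hAeq]; exact sorth_decomp ω htop horth hAle
  have hSB : sorth ω B = ⨆ i, T i := by rw [hBeq]; exact sorth_decomp ω htop horth hBle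
  -- component values
  have hS0 : S 0 = As 0 := hlag0.symm
  have hS1 : S 1 = As 1 := hlagA1.symm
  have hS2 : S 2 = ⊥ := by rw [hSdef]; simp only; rw [hA2, inf_comm]; exact hsymp 2
  have hS3 : S 3 = As 3 := hlagA3.symm
  have hS4 : S 4 = ⊥ := by rw [hSdef]; simp only; rw [hA4, inf_comm]; exact hsymp 4
  have hT0 : T 0 = As 0 := by rw [hTdef]; simp only; rw [← hAB0]; exact hlag0.symm
  have hT1 : T 1 = Bs 1 := hlagB1.symm
  have hT2 : T 2 = ⊥ := by rw [hTdef]; simp only; rw [hB2, inf_comm]; exact hsymp 2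
  have hT3 : T 3 = ⊥ := by rw [hTdef]; simp only; rw [hB3, inf_comm]; exact hsymp 3
  have hT4 : T 4 = Bs 4 := hlagB4.symm
  -- dimensions of the lagrangians
  have hd0 : finrank ℝ (As 0) = n 0 := by
    have := lagrangian_dim ω hω hωalt htop hind horth 0 hlag0
    have h0 := hn 0; omega
  have hd1 : finrank ℝ (As 1) = n 1 := by
    have := lagrangian_dim ω hω hωalt htop hind horth 1 hlagA1
    have h0 := hn 1; omega
  have hd3 : finrank ℝ (As 3) = n 3 := by
    have := lagrangian_dim ω hω hωalt htop hind horth 3 hlagA3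
    have h0 := hn 3; omega
  have hdB1 : finrank ℝ (Bs 1) = n 1 := by
    have := lagrangian_dim ω hω hωalt htop hind horth 1 hlagB1
    have h0 := hn 1; omega
  have hdB4 : finrank ℝ (Bs 4) = n 4 := by
    have := lagrangian_dim ω hω hωalt htop hind horth 4 hlagB4
    have h0 := hn 4; omega
  refine ⟨?_, ?_, ?_, ?_, ?_⟩
  · -- dim (A^ω ⊓ B^ω) = n 0
    have c0 : S 0 ⊓ T 0 = As 0 := by rw [hS0, hT0, inf_idem]
    have c1 : S 1 ⊓ T 1 = ⊥ := by rw [hS1, hT1, hdisj1]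
    have c2 : S 2 ⊓ T 2 = ⊥ := by rw [hS2, bot_inf_eq]
    have c3 : S 3 ⊓ T 3 = ⊥ := by rw [hT3, inf_bot_eq]
    have c4 : S 4 ⊓ T 4 = ⊥ := by rw [hS4, bot_inf_eq]
    rw [hSA, hSB, graded_inf hind hSle hTle,
      finrank_iSup_indep (hind.mono fun i => (inf_le_left).trans (hSle i)),
      Fin.sum_univ_five, c0, c1, c2, c3, c4, finrank_bot]
    simp [hd0]
  · rw [hSA, finrank_iSup_indep (hind.mono hSle), Fin.sum_univ_five,
      hS0, hS1, hS2, hS3, hS4]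
    simp [hd0, hd1, hd3]
  · rw [hSB, finrank_iSup_indep (hind.mono hTle), Fin.sum_univ_five,
      hT0, hT1, hT2, hT3, hT4]
    simp [bot_inf_eq, finrank_bot, hd0, hdB1, hdB4]
  · rw [← finrank_top ℝ V, ← htop, finrank_iSup_indep hind, Fin.sum_univ_five,
      hn 0, hn 1, hn 2, hn 3, hn 4]
    ring
  · have c0 : S 0 ⊓ Bs 0 = As 0 := by rw [hS0, ← hAB0, inf_idem]
    have c1 : S 1 ⊓ Bs 1 = ⊥ := by rw [hS1, hdisj1]
    have c2 : S 2 ⊓ Bs 2 = ⊥ := by rw [hS2, bot_inf_eq]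
    have c3 : S 3 ⊓ Bs 3 = As 3 := by
      rw [hS3, hB3, inf_eq_left]; exact hAle 3
    have c4 : S 4 ⊓ Bs 4 = ⊥ := by rw [hS4, bot_inf_eq]
    rw [hSA, hBeq, graded_inf hind hSle hBle,
      finrank_iSup_indep (hind.mono fun i => (inf_le_left).trans (hSle i)),
      Fin.sum_univ_five, c0, c1, c2, c3, c4, finrank_bot]
    simp [hd0, hd3]
end

section
/- (Realizability of canonical invariants) Let k₁, k₂, k₃, k₄, k₅ be natural numbers satisfying k₁ ≤ k₅ ≤ k₂ and k₁ + k₂ ≤ k₃ + k₅ ≤ k₁ + k₄. Then there exist a finite-dimensional real vector space V of dimension 2k₄, a nondegenerate alternating bilinear form ω on V, and coisotropic subspaces A, B ⊆ V such that dim(A^ω ∩ B^ω) = k₁, dim A^ω = k₂, dim B^ω = k₃, and dim(A^ω ∩ B) = k₅. -/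
open Module

variable {V : Type*} [AddCommGroup V] [Module ℝ V]

namespace CIRAux

variable (n : ℕ)

abbrev Wn (n : ℕ) := (Fin n ⊕ Fin n) → ℝ

/-- standard symplectic form -/
def sform : LinearMap.BilinForm ℝ (Wn n) :=
  LinearMap.mk₂ ℝ
    (fun v w => ∑ i : Fin n, (v (Sum.inl i) * w (Sum.inr i) - v (Sum.inr i) * w (Sum.inl i)))
    (by intro m₁ m₂ w; rw [← Finset.sum_add_distrib]; apply Finset.sum_congr rfl; intros; simp; ring)
    (by intro c m w; simp only [Pi.smul_apply, smul_eq_mul]; rw [Finset.mul_sum]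
        apply Finset.sum_congr rfl; intros; ring)
    (by intro m w₁ w₂; rw [← Finset.sum_add_distrib]; apply Finset.sum_congr rfl; intros; simp; ring)
    (by intro c m w; simp only [Pi.smul_apply, smul_eq_mul]; rw [Finset.mul_sum]
        apply Finset.sum_congr rfl; intros; ring)

lemma sform_apply (v w : Wn n) :
    sform n v w = ∑ i : Fin n, (v (Sum.inl i) * w (Sum.inr i) - v (Sum.inr i) * w (Sum.inl i)) := rfl

lemma sform_isAlt : (sform n).IsAlt := by
  intro v; rw [sform_apply]; apply Finset.sum_eq_zero; intros; ring

lemma sform_single_right (v : Wn n) (j : Fin n ⊕ Fin n) :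
    sform n v (Pi.single j 1) =
      Sum.elim (fun i => - v (Sum.inr i)) (fun i => v (Sum.inl i)) j := by
  rcases j with i | i <;>
  · rw [sform_apply, Finset.sum_eq_single i] <;>
    · intros
      simp_all [Pi.single_apply]

lemma sform_nondeg : (sform n).Nondegenerate := by
  apply LinearMap.BilinForm.Nondegenerate.ofSeparatingLeft
  intro v hv
  funext m
  rcases m with i | i
  · have := hv (Pi.single (Sum.inr i) 1)
    rw [sform_single_right] at this
    simpa using this
  · have := hv (Pi.single (Sum.inl i) 1)
    rw [sform_single_right] at this
    simpa using this

/-- the coordinate subspace supported on `s` -/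
def P (s : Set (Fin n ⊕ Fin n)) : Submodule ℝ (Wn n) where
  carrier := {v | ∀ m ∉ s, v m = 0}
  add_mem' := by intro a b ha hb m hm; simp [ha m hm, hb m hm]
  zero_mem' := by intro m hm; simp
  smul_mem' := by intro c a ha m hm; simp [ha m hm]

lemma mem_P {s : Set (Fin n ⊕ Fin n)} {v : Wn n} : v ∈ P n s ↔ ∀ m ∉ s, v m = 0 := Iff.rfl

lemma P_mono {s t : Set (Fin n ⊕ Fin n)} (h : s ⊆ t) : P n s ≤ P n t := by
  intro v hv m hm
  exact hv m (fun hs => hm (h hs))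

lemma P_inter (s t : Set (Fin n ⊕ Fin n)) : P n s ⊓ P n t = P n (s ∩ t) := by
  ext v
  simp only [Submodule.mem_inf, mem_P]
  constructor
  · rintro ⟨hs, ht⟩ m hm
    by_cases h : m ∈ s
    · exact ht m (fun h' => hm ⟨h, h'⟩)
    · exact hs m h
  · intro h
    exact ⟨fun m hm => h m (fun h' => hm h'.1), fun m hm => h m (fun h' => hm h'.2)⟩

lemma single_mem_P {s : Set (Fin n ⊕ Fin n)} {j : Fin n ⊕ Fin n} (hj : j ∈ s) :
    (Pi.single j 1 : Wn n) ∈ P n s := by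
  intro m hm
  have : m ≠ j := fun h => hm (h ▸ hj)
  simp [Pi.single_apply, this]

lemma sorth_P (s : Set (Fin n ⊕ Fin n)) :
    sorth (sform n) (P n s) = P n {m | Sum.swap m ∉ s} := by
  ext v
  constructor
  · intro hv m hm
    simp only [Set.mem_setOf_eq, not_not] at hm
    have := hv (Pi.single (Sum.swap m) 1) (single_mem_P n hm)
    rw [sform_single_right] at this
    rcases m with i | i <;> simpa using this
  · intro hv w hw
    rw [sform_apply]
    apply Finset.sum_eq_zero
    intro i _
    have h1 : v (Sum.inl i) * w (Sum.inr i) = 0 := by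
      by_cases h : Sum.inr i ∈ s
      · have : v (Sum.inl i) = 0 := hv _ (by simpa using h)
        simp [this]
      · simp [hw _ h]
    have h2 : v (Sum.inr i) * w (Sum.inl i) = 0 := by
      by_cases h : Sum.inl i ∈ s
      · have : v (Sum.inr i) = 0 := hv _ (by simpa using h)
        simp [this]
      · simp [hw _ h]
    rw [h1, h2, sub_zero]

open scoped Classical in
/-- `P s` is isomorphic to functions on `s`. -/
noncomputable def PEquiv (s : Set (Fin n ⊕ Fin n)) : (P n s) ≃ₗ[ℝ] (s → ℝ) where
  toFun v := fun m => v.1 m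
  map_add' _ _ := rfl
  map_smul' _ _ := rfl
  invFun f := ⟨fun m => if h : m ∈ s then f ⟨m, h⟩ else 0, fun m hm => dif_neg hm⟩
  left_inv := by
    rintro ⟨v, hv⟩
    ext m
    by_cases h : m ∈ s
    · simp [h]
    · simp [h, hv m h]
  right_inv := by
    intro f
    ext ⟨m, hm⟩
    simp [hm]

lemma finrank_P (s : Set (Fin n ⊕ Fin n)) : finrank ℝ (P n s) = Nat.card s := by
  classical
  rw [(PEquiv n s).finrank_eq]
  simp [Nat.card_eq_fintype_card]

end CIRAux

namespace CIRAux

lemma card_interval {m a b : ℕ} (hb : b ≤ m) :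
    Nat.card {i : Fin m // a ≤ ↑i ∧ ↑i < b} = b - a := by
  have e : {i : Fin m // a ≤ ↑i ∧ ↑i < b} ≃ Fin (b - a) :=
  { toFun := fun x => ⟨↑x.1 - a, by have := x.2; omega⟩
    invFun := fun j => ⟨⟨a + ↑j, by have := j.2; omega⟩, by have := j.2; constructor <;> simp <;> omega⟩
    left_inv := by rintro ⟨i, h⟩; ext; simp; omega
    right_inv := by rintro ⟨j, hj⟩; ext; simp }
  rw [Nat.card_congr e, Nat.card_eq_fintype_card, Fintype.card_fin]

def idx2 (n a b c d : ℕ) : Set (Fin n ⊕ Fin n) :=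
  {x | Sum.elim (fun i : Fin n => a ≤ ↑i ∧ ↑i < b) (fun i : Fin n => c ≤ ↑i ∧ ↑i < d) x}

lemma mem_idx2_inl {n a b c d : ℕ} {i : Fin n} :
    Sum.inl i ∈ idx2 n a b c d ↔ a ≤ ↑i ∧ ↑i < b := Iff.rfl

lemma mem_idx2_inr {n a b c d : ℕ} {i : Fin n} :
    Sum.inr i ∈ idx2 n a b c d ↔ c ≤ ↑i ∧ ↑i < d := Iff.rfl

lemma card_idx2 {n a b c d : ℕ} (hb : b ≤ n) (hd : d ≤ n) :
    Nat.card (idx2 n a b c d) = (b - a) + (d - c) := by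
  have e : (idx2 n a b c d) ≃
      {i : Fin n // a ≤ ↑i ∧ ↑i < b} ⊕ {i : Fin n // c ≤ ↑i ∧ ↑i < d} := Equiv.subtypeSum
  rw [Nat.card_congr e, Nat.card_sum, card_interval hb, card_interval hd]

lemma sorth_P' (n : ℕ) (t : Set (Fin n ⊕ Fin n)) :
    sorth (sform n) (P n {m | Sum.swap m ∉ t}) = P n t := by
  rw [sorth_P]
  congr 1
  ext m
  simp

end CIRAux

open CIRAux in
theorem canonical_invariants_realizable (k₁ k₂ k₃ k₄ k₅ : ℕ)
    (h₁ : k₁ ≤ k₅) (h₂ : k₅ ≤ k₂)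
    (h₃ : k₁ + k₂ ≤ k₃ + k₅) (h₄ : k₃ + k₅ ≤ k₁ + k₄) :
    ∃ (W : Type) (_ : AddCommGroup W) (_ : Module ℝ W) (_ : FiniteDimensional ℝ W)
      (ω : LinearMap.BilinForm ℝ W) (A B : Submodule ℝ W),
      ω.Nondegenerate ∧ ω.IsAlt ∧
      finrank ℝ W = 2 * k₄ ∧
      sorth ω A ≤ A ∧ sorth ω B ≤ B ∧
      finrank ℝ (sorth ω A ⊓ sorth ω B : Submodule ℝ W) = k₁ ∧
      finrank ℝ (sorth ω A) = k₂ ∧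
      finrank ℝ (sorth ω B) = k₃ ∧
      finrank ℝ (sorth ω A ⊓ B : Submodule ℝ W) = k₅ := by
  set n := k₄ with hn
  set X := k₃ + k₅ - k₁ with hX
  set tA : Set (Fin n ⊕ Fin n) := idx2 n 0 k₂ 0 0 with htA
  set tB : Set (Fin n ⊕ Fin n) := idx2 n 0 k₁ k₅ X with htB
  refine ⟨Wn n, inferInstance, inferInstance, inferInstance, sform n,
    P n {m | Sum.swap m ∉ tA}, P n {m | Sum.swap m ∉ tB},
    sform_nondeg n, sform_isAlt n, ?_, ?_, ?_, ?_, ?_, ?_, ?_⟩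
  · -- finrank W = 2 * k₄
    simp [Wn]
    omega
  · -- coisotropy of A
    rw [sorth_P']
    apply P_mono
    rintro (i | i) hm
    · simp only [Set.mem_setOf_eq, Sum.swap_inl, htA, mem_idx2_inr]
      omega
    · exact absurd ((mem_idx2_inr.mp hm).2) (by omega)
  · -- coisotropy of B
    rw [sorth_P']
    apply P_mono
    rintro (i | i) hm <;>
      simp only [Set.mem_setOf_eq, Sum.swap_inl, Sum.swap_inr, htB, mem_idx2_inl, mem_idx2_inr]
    · have h1 := (mem_idx2_inl.mp hm).2
      omega
    · have h1 := (mem_idx2_inr.mp hm).1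
      omega
  · -- finrank (A^ω ⊓ B^ω) = k₁
    rw [sorth_P', sorth_P', P_inter]
    have : tA ∩ tB = idx2 n 0 k₁ 0 0 := by
      ext (i | i) <;> simp [htA, htB, mem_idx2_inl, mem_idx2_inr, Set.mem_inter_iff] <;> omega
    rw [this, finrank_P, card_idx2 (by omega) (by omega)]
    omega
  · rw [sorth_P', finrank_P, htA, card_idx2 (by omega) (by omega)]
    omega
  · rw [sorth_P', finrank_P, htB, card_idx2 (by omega) (by omega)]
    omega
  · -- finrank (A^ω ⊓ B) = k₅
    rw [sorth_P', P_inter]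
    have : tA ∩ {m | Sum.swap m ∉ tB} = idx2 n 0 k₅ 0 0 := by
      ext (i | i) <;>
        simp [htA, htB, mem_idx2_inl, mem_idx2_inr, Set.mem_inter_iff, Set.mem_setOf_eq,
          Sum.swap] <;> omega
    rw [this, finrank_P, card_idx2 (by omega) (by omega)]
    omega
end
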